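/- Consider n jobs to be scheduled in total, each job J_j having positive processing time p_j, weight w_j ≥ 0, and due date d_j, and m machines partitioned into a set of high-speed machines (of speed V_1) and a set of low-speed machines (of speed V_0), with 0 < V_0 < V_1. Let s and s' be partial solutions, where a partial solution s consists of a partial schedule σ_s started at time 0 without idle time (giving machine completion times C_{M_i}(σ_s) and cost Σ_{j∈σ_s} w_j U_j(σ_s)), a set Ω_s of remaining candidate jobs, and nonnegative integers k_s^1 and k_s^0 with |σ_s| + k_s^1 + k_s^0 = n (and similarly for s'). Suppose: (1) C_{M_i}(σ_s) ≤ C_{M_i}(σ_{s'}) for every machine M_i; (2) Σ_{j∈σ_s} w_j U_j(σ_s) ≤ Σ_{j∈σ_{s'}} w_j U_j(σ_{s'}); (3) k_s^1 ≤ k_{s'}^1; (4) k_s^0 ≤ k_{s'}^0; (5) Ω_{s'} ⊆ Ω_s. Then the minimum total weighted number of tardy jobs over all completions of s is at most the minimum total weighted number of tardy jobs over all completions of s'; i.e., s dominates s'. -/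

import Mathlib

/-- A partial solution: a partial schedule (on the jobs of `dom`, started at time 0
without idle time, with distinct contiguous 1-based positions on each machine), a set
`rem` (`Ω_s`) of remaining candidate jobs, and the numbers `k1` (resp. `k0`) of jobs
still to be scheduled on high-speed (resp. low-speed) machines. -/
structure PartialSol (J : Type) (m : ℕ) where
  dom : Finset J
  mach : J → Fin m
  pos : J → ℕ
  rem : Finset J
  k1 : ℕ
  k0 : ℕ
  pos_pos : ∀ j ∈ dom, 1 ≤ pos j
  inj : ∀ j ∈ dom, ∀ j' ∈ dom, mach j = mach j' → pos j = pos j' → j = j'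
  contiguous : ∀ j ∈ dom, 2 ≤ pos j → ∃ j' ∈ dom, mach j' = mach j ∧ pos j' = pos j - 1
  disj : Disjoint dom rem

namespace PartialSol

variable {J : Type} {m : ℕ} [DecidableEq J]

/-- Completion time `C_{M_i}(σ_s)` of machine `i` in the partial schedule. -/
noncomputable def machC (s : PartialSol J m) (p : J → ℝ) (V : Fin m → ℝ) (i : Fin m) : ℝ :=
  (∑ j ∈ s.dom.filter (fun j => s.mach j = i), p j) / V i

/-- Completion time of a scheduled job `j`. -/
noncomputable def jobC (s : PartialSol J m) (p : J → ℝ) (V : Fin m → ℝ) (j : J) : ℝ :=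
  (∑ j' ∈ s.dom.filter (fun j' => s.mach j' = s.mach j ∧ s.pos j' ≤ s.pos j), p j')
    / V (s.mach j)

/-- Cost `Σ_{j ∈ σ_s} w_j U_j(σ_s)`: total weight of the tardy scheduled jobs. -/
noncomputable def cost (s : PartialSol J m) (p w d : J → ℝ) (V : Fin m → ℝ) : ℝ :=
  ∑ j ∈ s.dom, if d j < s.jobC p V j then w j else 0

/-- `c` is a completion of `s`: it keeps every decision of `σ_s`, and appends `k1` jobs
from `Ω_s` on high-speed machines and `k0` jobs from `Ω_s` on low-speed machines (by
validity of the schedule, each appended job starts when its machine becomes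
available). -/
def Completes (fast : Fin m → Bool) (c s : PartialSol J m) : Prop :=
  s.dom ⊆ c.dom ∧
  (∀ j ∈ s.dom, c.mach j = s.mach j ∧ c.pos j = s.pos j) ∧
  c.dom \ s.dom ⊆ s.rem ∧
  ((c.dom \ s.dom).filter (fun j => fast (c.mach j) = true)).card = s.k1 ∧
  ((c.dom \ s.dom).filter (fun j => fast (c.mach j) = false)).card = s.k0

end PartialSol


open Finset

private lemma natset_eq_Icc (T : Finset ℕ) (h1 : ∀ x ∈ T, 1 ≤ x)
    (h2 : ∀ x ∈ T, 2 ≤ x → x - 1 ∈ T) : T = Finset.Icc 1 T.card := by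
  have key : ∀ k, ∀ x ∈ T, 1 ≤ x - k → x - k ∈ T := by
    intro k
    induction k with
    | zero => intro x hx _; simpa using hx
    | succ nn ih =>
      intro x hx h
      have h1' : 1 ≤ x - nn := by omega
      have hmem := ih x hx h1'
      have hres := h2 _ hmem (by omega)
      have heq : x - nn - 1 = x - (nn + 1) := by omega
      rwa [heq] at hres
  have hsub : T ⊆ Finset.Icc 1 T.card := by
    intro x hx
    have hIcc : Finset.Icc 1 x ⊆ T := by
      intro y hy
      rw [Finset.mem_Icc] at hy
      have heq : x - (x - y) = y := by omega
      have hres := key (x - y) x hx (by omega)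
      rwa [heq] at hres
    have hcard : x ≤ T.card := by
      have := Finset.card_le_card hIcc
      simpa using this
    exact Finset.mem_Icc.mpr ⟨h1 x hx, hcard⟩
  exact Finset.eq_of_subset_of_card_le hsub (by simp)

lemma PartialSol.pos_image {J : Type} {m : ℕ} [DecidableEq J] (t : PartialSol J m) (i : Fin m) :
    (t.dom.filter (fun j => t.mach j = i)).image t.pos
      = Finset.Icc 1 ((t.dom.filter (fun j => t.mach j = i)).card) := by
  set D := t.dom.filter (fun j => t.mach j = i) with hD
  have hinj : Set.InjOn t.pos D := by
    intro a ha b hb hab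
    rw [Finset.mem_coe, hD, Finset.mem_filter] at ha hb
    exact t.inj a ha.1 b hb.1 (ha.2.trans hb.2.symm) hab
  have hcard : (D.image t.pos).card = D.card := Finset.card_image_of_injOn hinj
  have hres := natset_eq_Icc (D.image t.pos)
    (by
      intro x hx
      obtain ⟨j, hj, rfl⟩ := Finset.mem_image.mp hx
      exact t.pos_pos j (Finset.mem_filter.mp hj).1)
    (by
      intro x hx h2x
      obtain ⟨j, hj, rfl⟩ := Finset.mem_image.mp hx
      obtain ⟨j', hj', hm, hp⟩ := t.contiguous j (Finset.mem_filter.mp hj).1 h2x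
      exact Finset.mem_image.mpr ⟨j', Finset.mem_filter.mpr
        ⟨hj', by rw [hm]; exact (Finset.mem_filter.mp hj).2⟩, hp⟩)
  rwa [hcard] at hres

lemma PartialSol.pos_mem_Icc {J : Type} {m : ℕ} [DecidableEq J] (t : PartialSol J m) {j : J}
    (hj : j ∈ t.dom) :
    t.pos j ≤ (t.dom.filter (fun k => t.mach k = t.mach j)).card := by
  have himg := t.pos_image (t.mach j)
  have hmem : t.pos j ∈ (t.dom.filter (fun k => t.mach k = t.mach j)).image t.pos :=
    Finset.mem_image.mpr ⟨j, Finset.mem_filter.mpr ⟨hj, rfl⟩, rfl⟩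
  rw [himg] at hmem
  exact (Finset.mem_Icc.mp hmem).2

lemma PartialSol.exists_pos_eq {J : Type} {m : ℕ} [DecidableEq J] (t : PartialSol J m) (i : Fin m)
    {r : ℕ} (h1 : 1 ≤ r) (h2 : r ≤ (t.dom.filter (fun k => t.mach k = i)).card) :
    ∃ j ∈ t.dom, t.mach j = i ∧ t.pos j = r := by
  have himg := t.pos_image i
  have hmem : r ∈ (t.dom.filter (fun j => t.mach j = i)).image t.pos := by
    rw [himg]; exact Finset.mem_Icc.mpr ⟨h1, h2⟩
  obtain ⟨j, hj, hjr⟩ := Finset.mem_image.mp hmem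
  exact ⟨j, (Finset.mem_filter.mp hj).1, (Finset.mem_filter.mp hj).2, hjr⟩

/-- (Dominance rule.) If the partial solutions `s` and `s'` satisfy
(1) machine-wise smaller completion times, (2) smaller partial cost, (3) `k_s^1 ≤
k_{s'}^1`, (4) `k_s^0 ≤ k_{s'}^0`, and (5) `Ω_{s'} ⊆ Ω_s`, then the best completion of
`s` costs no more than the best completion of `s'`: `s` dominates `s'`. -/
theorem dominance_rule
    {J : Type} [Fintype J] [DecidableEq J] {m n : ℕ}
    (p w d : J → ℝ) (hp : ∀ j, 0 < p j) (hw : ∀ j, 0 ≤ w j)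
    (fast : Fin m → Bool) (V0 V1 : ℝ) (hV0 : 0 < V0) (hV01 : V0 < V1)
    (s s' : PartialSol J m)
    (hns : s.dom.card + s.k1 + s.k0 = n)
    (hns' : s'.dom.card + s'.k1 + s'.k0 = n)
    (h1 : ∀ i : Fin m, s.machC p (fun i => if fast i then V1 else V0) i
            ≤ s'.machC p (fun i => if fast i then V1 else V0) i)
    (h2 : s.cost p w d (fun i => if fast i then V1 else V0)
            ≤ s'.cost p w d (fun i => if fast i then V1 else V0))
    (h3 : s.k1 ≤ s'.k1) (h4 : s.k0 ≤ s'.k0)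
    (h5 : s'.rem ⊆ s.rem) :
    ∀ c' : PartialSol J m, PartialSol.Completes fast c' s' →
      ∃ c : PartialSol J m, PartialSol.Completes fast c s ∧
        c.cost p w d (fun i => if fast i then V1 else V0)
          ≤ c'.cost p w d (fun i => if fast i then V1 else V0) := by
  intro c' hc'
  classical
  obtain ⟨hsub', hagree, hnewrem, hk1', hk0'⟩ := hc'
  set V : Fin m → ℝ := fun i => if fast i then V1 else V0 with hVdef
  have hV : ∀ i, 0 < V i := by
    intro i
    by_cases h : fast i <;> simp [hVdef, h] <;> linarith
  set N' : Finset J := c'.dom \ s'.dom with hN'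
  have hN'sub : N' ⊆ s.rem := fun j hj => h5 (hnewrem hj)
  have hN'c' : N' ⊆ c'.dom := Finset.sdiff_subset
  have hN'ns' : ∀ j ∈ N', j ∉ s'.dom := fun j hj => (Finset.mem_sdiff.mp hj).2
  obtain ⟨A, hA, hAcard⟩ := Finset.exists_subset_card_eq
    (s := N'.filter (fun j => fast (c'.mach j) = true)) (n := s.k1) (by rw [hk1']; exact h3)
  obtain ⟨B, hB, hBcard⟩ := Finset.exists_subset_card_eq
    (s := N'.filter (fun j => fast (c'.mach j) = false)) (n := s.k0) (by rw [hk0']; exact h4)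
  set K : Finset J := A ∪ B with hK
  have hAfast : ∀ j ∈ A, fast (c'.mach j) = true := fun j hj => (Finset.mem_filter.mp (hA hj)).2
  have hBslow : ∀ j ∈ B, fast (c'.mach j) = false := fun j hj => (Finset.mem_filter.mp (hB hj)).2
  have hKN' : K ⊆ N' := by
    intro j hj
    rcases Finset.mem_union.mp hj with h | h
    · exact Finset.filter_subset _ _ (hA h)
    · exact Finset.filter_subset _ _ (hB h)
  have hKrem : K ⊆ s.rem := fun j hj => hN'sub (hKN' hj)
  have hKdom : ∀ j ∈ K, j ∉ s.dom := by
    intro j hj hjd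
    exact (Finset.disjoint_left.mp s.disj) hjd (hKrem hj)
  have hKc' : K ⊆ c'.dom := fun j hj => hN'c' (hKN' hj)
  have hsKdisj : Disjoint s.dom K := by
    rw [Finset.disjoint_left]
    intro a ha hb
    exact hKdom a hb ha
  -- ranks of the kept new jobs
  set rank : J → ℕ :=
    fun j => (K.filter (fun k => c'.mach k = c'.mach j ∧ c'.pos k ≤ c'.pos j)).card with hrankdef
  have hrank_pos : ∀ j ∈ K, 1 ≤ rank j := by
    intro j hj
    have hmem : j ∈ K.filter (fun k => c'.mach k = c'.mach j ∧ c'.pos k ≤ c'.pos j) :=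
      Finset.mem_filter.mpr ⟨hj, rfl, le_refl _⟩
    exact Finset.card_pos.mpr ⟨j, hmem⟩
  have hrank_mono : ∀ j ∈ K, ∀ j' ∈ K, c'.mach j = c'.mach j' →
      c'.pos j ≤ c'.pos j' → rank j ≤ rank j' := by
    intro j hj j' hj' hm hpp
    apply Finset.card_le_card
    intro k hk
    rw [Finset.mem_filter] at hk ⊢
    exact ⟨hk.1, hk.2.1.trans hm, hk.2.2.trans hpp⟩
  have hrank_strict : ∀ j ∈ K, ∀ j' ∈ K, c'.mach j = c'.mach j' →
      c'.pos j < c'.pos j' → rank j < rank j' := by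
    intro j hj j' hj' hm hpp
    apply Finset.card_lt_card
    rw [Finset.ssubset_iff_of_subset]
    · refine ⟨j', Finset.mem_filter.mpr ⟨hj', rfl, le_refl _⟩, ?_⟩
      intro hcon
      have := (Finset.mem_filter.mp hcon).2.2
      omega
    · intro k hk
      rw [Finset.mem_filter] at hk ⊢
      exact ⟨hk.1, hk.2.1.trans hm, hk.2.2.trans hpp.le⟩
  have hrank_le_iff : ∀ j ∈ K, ∀ j' ∈ K, c'.mach j = c'.mach j' →
      (rank j ≤ rank j' ↔ c'.pos j ≤ c'.pos j') := by
    intro j hj j' hj' hm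
    constructor
    · intro h
      by_contra hcon
      push_neg at hcon
      have := hrank_strict j' hj' j hj hm.symm hcon
      omega
    · exact hrank_mono j hj j' hj' hm
  have hrank_inj : ∀ j ∈ K, ∀ j' ∈ K, c'.mach j = c'.mach j' → rank j = rank j' → j = j' := by
    intro j hj j' hj' hm hr
    have hx1 : c'.pos j ≤ c'.pos j' := (hrank_le_iff j hj j' hj' hm).1 hr.le
    have hx2 : c'.pos j' ≤ c'.pos j := (hrank_le_iff j' hj' j hj hm.symm).1 hr.ge
    exact c'.inj j (hKc' hj) j' (hKc' hj') hm (le_antisymm hx1 hx2)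
  have hrank_le_card : ∀ j ∈ K, rank j ≤ (K.filter (fun k => c'.mach k = c'.mach j)).card := by
    intro j hj
    apply Finset.card_le_card
    intro k hk
    rw [Finset.mem_filter] at hk ⊢
    exact ⟨hk.1, hk.2.1⟩
  have hrank_image : ∀ i : Fin m,
      (K.filter (fun k => c'.mach k = i)).image rank
        = Finset.Icc 1 ((K.filter (fun k => c'.mach k = i)).card) := by
    intro i
    have hinj : Set.InjOn rank (K.filter (fun k => c'.mach k = i)) := by
      intro a ha b hb hab
      rw [Finset.mem_coe, Finset.mem_filter] at ha hb
      exact hrank_inj a ha.1 b hb.1 (ha.2.trans hb.2.symm) hab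
    have hsubIcc : (K.filter (fun k => c'.mach k = i)).image rank
        ⊆ Finset.Icc 1 ((K.filter (fun k => c'.mach k = i)).card) := by
      intro x hx
      obtain ⟨j, hj, rfl⟩ := Finset.mem_image.mp hx
      rw [Finset.mem_filter] at hj
      refine Finset.mem_Icc.mpr ⟨hrank_pos j hj.1, ?_⟩
      have := hrank_le_card j hj.1
      rwa [hj.2] at this
    have hcard : ((K.filter (fun k => c'.mach k = i)).image rank).card
        = (K.filter (fun k => c'.mach k = i)).card := Finset.card_image_of_injOn hinj
    exact Finset.eq_of_subset_of_card_le hsubIcc (by rw [hcard]; simp)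
  -- new positions in c' exceed all old positions of s'
  have ha'_lt : ∀ j ∈ N', (s'.dom.filter (fun k => s'.mach k = c'.mach j)).card < c'.pos j := by
    intro j hj
    by_contra hcon
    push_neg at hcon
    obtain ⟨j0, hj0d, hj0m, hj0p⟩ := s'.exists_pos_eq (c'.mach j) (c'.pos_pos j (hN'c' hj)) hcon
    have hm0 : c'.mach j0 = c'.mach j := by rw [(hagree j0 hj0d).1]; exact hj0m
    have hp0 : c'.pos j0 = c'.pos j := by rw [(hagree j0 hj0d).2]; exact hj0p
    have heq := c'.inj j0 (hsub' hj0d) j (hN'c' hj) hm0 hp0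
    exact hN'ns' j hj (heq ▸ hj0d)
  -- the new solution's data
  set oldc : Fin m → ℕ := fun i => (s.dom.filter (fun k => s.mach k = i)).card with holdc
  set cmach : J → Fin m := fun j => if j ∈ s.dom then s.mach j else c'.mach j with hcmachdef
  set cpos : J → ℕ :=
    fun j => if j ∈ s.dom then s.pos j else oldc (c'.mach j) + rank j with hcposdef
  have hcmach_old : ∀ j ∈ s.dom, cmach j = s.mach j := by
    intro j hj; simp only [hcmachdef, if_pos hj]
  have hcpos_old : ∀ j ∈ s.dom, cpos j = s.pos j := by
    intro j hj; simp only [hcposdef, if_pos hj]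
  have hcmach_new : ∀ j ∈ K, cmach j = c'.mach j := by
    intro j hj; simp only [hcmachdef, if_neg (hKdom j hj)]
  have hcpos_new : ∀ j ∈ K, cpos j = oldc (c'.mach j) + rank j := by
    intro j hj; simp only [hcposdef, if_neg (hKdom j hj)]
  have holdc_le : ∀ j ∈ s.dom, s.pos j ≤ oldc (s.mach j) := by
    intro j hj
    have := s.pos_mem_Icc hj
    simpa only [holdc] using this
  -- invariants of the new solution
  have hpos_pos : ∀ j ∈ s.dom ∪ K, 1 ≤ cpos j := by
    intro j hj
    rcases Finset.mem_union.mp hj with h | h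
    · rw [hcpos_old j h]; exact s.pos_pos j h
    · rw [hcpos_new j h]; have := hrank_pos j h; omega
  have hinj : ∀ j ∈ s.dom ∪ K, ∀ j' ∈ s.dom ∪ K,
      cmach j = cmach j' → cpos j = cpos j' → j = j' := by
    intro j hj j' hj' hm hpp
    rcases Finset.mem_union.mp hj with h | h <;> rcases Finset.mem_union.mp hj' with h' | h'
    · exact s.inj j h j' h' (by rwa [hcmach_old j h, hcmach_old j' h'] at hm)
        (by rwa [hcpos_old j h, hcpos_old j' h'] at hpp)
    · exfalso
      rw [hcmach_old j h, hcmach_new j' h'] at hm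
      rw [hcpos_old j h, hcpos_new j' h'] at hpp
      have hle : s.pos j ≤ oldc (s.mach j) := holdc_le j h
      rw [hm] at hle
      have := hrank_pos j' h'
      omega
    · exfalso
      rw [hcmach_new j h, hcmach_old j' h'] at hm
      rw [hcpos_new j h, hcpos_old j' h'] at hpp
      have hle : s.pos j' ≤ oldc (s.mach j') := holdc_le j' h'
      rw [← hm] at hle
      have := hrank_pos j h
      omega
    · rw [hcmach_new j h, hcmach_new j' h'] at hm
      rw [hcpos_new j h, hcpos_new j' h'] at hpp
      rw [hm] at hpp
      have hr : rank j = rank j' := by omega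
      exact hrank_inj j h j' h' hm hr
  have hcontig : ∀ j ∈ s.dom ∪ K, 2 ≤ cpos j →
      ∃ j' ∈ s.dom ∪ K, cmach j' = cmach j ∧ cpos j' = cpos j - 1 := by
    intro j hj h2'
    rcases Finset.mem_union.mp hj with h | h
    · obtain ⟨j', hj', hm, hpp⟩ := s.contiguous j h (by rwa [hcpos_old j h] at h2')
      exact ⟨j', Finset.mem_union_left _ hj',
        by rw [hcmach_old j' hj', hcmach_old j h]; exact hm,
        by rw [hcpos_old j' hj', hcpos_old j h]; exact hpp⟩
    · rw [hcpos_new j h] at h2'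
      by_cases hr : 2 ≤ rank j
      · have hmem : rank j - 1 ∈ Finset.Icc 1 ((K.filter (fun k => c'.mach k = c'.mach j)).card) := by
          refine Finset.mem_Icc.mpr ⟨by omega, ?_⟩
          have := hrank_le_card j h
          omega
        rw [← hrank_image (c'.mach j)] at hmem
        obtain ⟨j', hj', hr'⟩ := Finset.mem_image.mp hmem
        rw [Finset.mem_filter] at hj'
        refine ⟨j', Finset.mem_union_right _ hj'.1, ?_, ?_⟩
        · rw [hcmach_new j' hj'.1, hcmach_new j h, hj'.2]
        · rw [hcpos_new j' hj'.1, hcpos_new j h, hj'.2, hr']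
          omega
      · have hr1 : rank j = 1 := by have := hrank_pos j h; omega
        have hold : 1 ≤ oldc (c'.mach j) := by omega
        obtain ⟨j0, hj0, hm0, hp0⟩ := s.exists_pos_eq (c'.mach j) hold (le_of_eq (by simp only [holdc]))
        refine ⟨j0, Finset.mem_union_left _ hj0, ?_, ?_⟩
        · rw [hcmach_old j0 hj0, hcmach_new j h, hm0]
        · rw [hcpos_old j0 hj0, hcpos_new j h, hp0, hr1]
          omega
  have hdisj : Disjoint (s.dom ∪ K) (s.rem \ K) := by
    rw [Finset.disjoint_left]
    intro a ha hb
    rw [Finset.mem_sdiff] at hb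
    rcases Finset.mem_union.mp ha with h | h
    · exact (Finset.disjoint_left.mp s.disj) h hb.1
    · exact hb.2 h
  set c : PartialSol J m := ⟨s.dom ∪ K, cmach, cpos, s.rem \ K, 0, 0,
    hpos_pos, hinj, hcontig, hdisj⟩ with hc
  have hcd : c.dom = s.dom ∪ K := rfl
  have hcm : c.mach = cmach := rfl
  have hcp : c.pos = cpos := rfl
  have hKd : c.dom \ s.dom = K := by
    rw [hcd]
    ext a
    rw [Finset.mem_sdiff, Finset.mem_union]
    constructor
    · rintro ⟨h | h, h2'⟩
      · exact absurd h h2'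
      · exact h
    · intro h
      exact ⟨Or.inr h, hKdom a h⟩
  refine ⟨c, ⟨?_, ?_, ?_, ?_, ?_⟩, ?_⟩
  · rw [hcd]; exact Finset.subset_union_left
  · intro j hj
    rw [hcm, hcp]
    exact ⟨hcmach_old j hj, hcpos_old j hj⟩
  · rw [hKd]; exact hKrem
  · rw [hKd]
    have hfe : K.filter (fun j => fast (c.mach j) = true) = A := by
      ext a
      rw [Finset.mem_filter]
      constructor
      · rintro ⟨ha, hf⟩
        rcases Finset.mem_union.mp ha with hh | hh
        · exact hh
        · rw [hcm] at hf
          rw [hcmach_new a ha, hBslow a hh] at hf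
          exact absurd hf (by simp)
      · intro ha
        have hmem : a ∈ K := Finset.mem_union_left _ ha
        refine ⟨hmem, ?_⟩
        rw [hcm, hcmach_new a hmem]
        exact hAfast a ha
    rw [hfe]
    exact hAcard
  · rw [hKd]
    have hfe : K.filter (fun j => fast (c.mach j) = false) = B := by
      ext a
      rw [Finset.mem_filter]
      constructor
      · rintro ⟨ha, hf⟩
        rcases Finset.mem_union.mp ha with hh | hh
        · rw [hcm] at hf
          rw [hcmach_new a ha, hAfast a hh] at hf
          exact absurd hf (by simp)
        · exact hh
      · intro ha
        have hmem : a ∈ K := Finset.mem_union_right _ ha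
        refine ⟨hmem, ?_⟩
        rw [hcm, hcmach_new a hmem]
        exact hBslow a ha
    rw [hfe]
    exact hBcard
  -- cost comparison
  · have L1 : ∀ j ∈ s.dom, c.jobC p V j = s.jobC p V j := by
      intro j hj
      have hfil : (s.dom ∪ K).filter (fun k => cmach k = cmach j ∧ cpos k ≤ cpos j)
          = s.dom.filter (fun k => s.mach k = s.mach j ∧ s.pos k ≤ s.pos j) := by
        ext k
        simp only [Finset.mem_filter, Finset.mem_union]
        constructor
        · rintro ⟨hk | hk, hm, hpk⟩
          · rw [hcmach_old k hk, hcmach_old j hj] at hm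
            rw [hcpos_old k hk, hcpos_old j hj] at hpk
            exact ⟨hk, hm, hpk⟩
          · exfalso
            rw [hcmach_new k hk, hcmach_old j hj] at hm
            rw [hcpos_new k hk, hcpos_old j hj] at hpk
            have hle : s.pos j ≤ oldc (s.mach j) := holdc_le j hj
            rw [hm] at hpk
            have := hrank_pos k hk
            omega
        · rintro ⟨hk, hm, hpk⟩
          exact ⟨Or.inl hk, by rw [hcmach_old k hk, hcmach_old j hj]; exact hm,
            by rw [hcpos_old k hk, hcpos_old j hj]; exact hpk⟩
      unfold PartialSol.jobC
      rw [hcd, hcm, hcp, hfil, hcmach_old j hj]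
    have L4 : ∀ j ∈ s'.dom, c'.jobC p V j = s'.jobC p V j := by
      intro j hj
      have hfil : c'.dom.filter (fun k => c'.mach k = c'.mach j ∧ c'.pos k ≤ c'.pos j)
          = s'.dom.filter (fun k => s'.mach k = s'.mach j ∧ s'.pos k ≤ s'.pos j) := by
        ext k
        simp only [Finset.mem_filter]
        constructor
        · rintro ⟨hk, hm, hpk⟩
          by_cases hks : k ∈ s'.dom
          · refine ⟨hks, ?_, ?_⟩
            · rw [← (hagree k hks).1, ← (hagree j hj).1]
              exact hm
            · rw [← (hagree k hks).2, ← (hagree j hj).2]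
              exact hpk
          · exfalso
            have hkN : k ∈ N' := by rw [hN', Finset.mem_sdiff]; exact ⟨hk, hks⟩
            have hlt := ha'_lt k hkN
            have hle : s'.pos j ≤ (s'.dom.filter (fun k' => s'.mach k' = s'.mach j)).card :=
              s'.pos_mem_Icc hj
            have hmm : s'.mach j = c'.mach k := by rw [hm, (hagree j hj).1]
            rw [hmm] at hle
            rw [(hagree j hj).2] at hpk
            omega
        · rintro ⟨hk, hm, hpk⟩
          refine ⟨hsub' hk, ?_, ?_⟩
          · rw [(hagree k hk).1, (hagree j hj).1]; exact hm
          · rw [(hagree k hk).2, (hagree j hj).2]; exact hpk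
      unfold PartialSol.jobC
      rw [hfil, (hagree j hj).1]
    have L3 : ∀ j ∈ K, c.jobC p V j ≤ c'.jobC p V j := by
      intro j hj
      have hmj : cmach j = c'.mach j := hcmach_new j hj
      have hfilc : (s.dom ∪ K).filter (fun k => cmach k = cmach j ∧ cpos k ≤ cpos j)
          = s.dom.filter (fun k => s.mach k = c'.mach j)
            ∪ K.filter (fun k => c'.mach k = c'.mach j ∧ c'.pos k ≤ c'.pos j) := by
        ext k
        simp only [Finset.mem_filter, Finset.mem_union]
        constructor
        · rintro ⟨hk | hk, hm, hpk⟩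
          · left
            rw [hcmach_old k hk, hmj] at hm
            exact ⟨hk, hm⟩
          · right
            rw [hcmach_new k hk, hmj] at hm
            rw [hcpos_new k hk, hcpos_new j hj] at hpk
            rw [hm] at hpk
            have hrk : rank k ≤ rank j := by omega
            exact ⟨hk, hm, (hrank_le_iff k hk j hj hm).1 hrk⟩
        · rintro (⟨hk, hm⟩ | ⟨hk, hm, hpk⟩)
          · refine ⟨Or.inl hk, ?_, ?_⟩
            · rw [hcmach_old k hk, hmj]; exact hm
            · rw [hcpos_old k hk, hcpos_new j hj]
              have hle : s.pos k ≤ oldc (s.mach k) := holdc_le k hk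
              rw [hm] at hle
              have := hrank_pos j hj
              omega
          · refine ⟨Or.inr hk, ?_, ?_⟩
            · rw [hcmach_new k hk, hmj]; exact hm
            · rw [hcpos_new k hk, hcpos_new j hj, hm]
              have := hrank_mono k hk j hj hm hpk
              omega
      have hfilc' : c'.dom.filter (fun k => c'.mach k = c'.mach j ∧ c'.pos k ≤ c'.pos j)
          = s'.dom.filter (fun k => s'.mach k = c'.mach j)
            ∪ N'.filter (fun k => c'.mach k = c'.mach j ∧ c'.pos k ≤ c'.pos j) := by
        ext k
        simp only [Finset.mem_filter, Finset.mem_union, hN', Finset.mem_sdiff]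
        constructor
        · rintro ⟨hk, hm, hpk⟩
          by_cases hks : k ∈ s'.dom
          · left
            rw [(hagree k hks).1] at hm
            exact ⟨hks, hm⟩
          · right
            exact ⟨⟨hk, hks⟩, hm, hpk⟩
        · rintro (⟨hk, hm⟩ | ⟨⟨hk, hks⟩, hm, hpk⟩)
          · refine ⟨hsub' hk, ?_, ?_⟩
            · rw [(hagree k hk).1]; exact hm
            · rw [(hagree k hk).2]
              have h1' := s'.pos_mem_Icc hk
              rw [hm] at h1'
              have h2' := ha'_lt j (hKN' hj)
              omega
          · exact ⟨hk, hm, hpk⟩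
      have hd1 : Disjoint (s.dom.filter (fun k => s.mach k = c'.mach j))
          (K.filter (fun k => c'.mach k = c'.mach j ∧ c'.pos k ≤ c'.pos j)) := by
        rw [Finset.disjoint_left]
        intro a ha hb
        exact hKdom a (Finset.mem_filter.mp hb).1 (Finset.mem_filter.mp ha).1
      have hd2 : Disjoint (s'.dom.filter (fun k => s'.mach k = c'.mach j))
          (N'.filter (fun k => c'.mach k = c'.mach j ∧ c'.pos k ≤ c'.pos j)) := by
        rw [Finset.disjoint_left]
        intro a ha hb
        exact hN'ns' a (Finset.mem_filter.mp hb).1 (Finset.mem_filter.mp ha).1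
      have hVi := hV (c'.mach j)
      have hsum1 : (∑ k ∈ s.dom.filter (fun k => s.mach k = c'.mach j), p k)
          ≤ ∑ k ∈ s'.dom.filter (fun k => s'.mach k = c'.mach j), p k := by
        have := h1 (c'.mach j)
        unfold PartialSol.machC at this
        exact (div_le_div_iff_of_pos_right hVi).mp this
      have hsum2 : (∑ k ∈ K.filter (fun k => c'.mach k = c'.mach j ∧ c'.pos k ≤ c'.pos j), p k)
          ≤ ∑ k ∈ N'.filter (fun k => c'.mach k = c'.mach j ∧ c'.pos k ≤ c'.pos j), p k := by
        apply Finset.sum_le_sum_of_subset_of_nonneg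
        · exact Finset.filter_subset_filter _ hKN'
        · intro k _ _
          exact (hp k).le
      unfold PartialSol.jobC
      rw [hcd, hcm, hcp, hfilc, hmj, hfilc']
      rw [Finset.sum_union hd1, Finset.sum_union hd2]
      exact (div_le_div_iff_of_pos_right hVi).mpr (add_le_add hsum1 hsum2)
    have hcostc : c.cost p w d V
        = s.cost p w d V + ∑ j ∈ K, (if d j < c.jobC p V j then w j else 0) := by
      rw [PartialSol.cost, hcd, Finset.sum_union hsKdisj]
      congr 1
      rw [PartialSol.cost]
      exact Finset.sum_congr rfl (fun j hj => by rw [L1 j hj])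
    have hcun : c'.dom = s'.dom ∪ N' := by
      rw [hN', Finset.union_sdiff_of_subset hsub']
    have hcostc' : c'.cost p w d V
        = s'.cost p w d V + ∑ j ∈ N', (if d j < c'.jobC p V j then w j else 0) := by
      rw [PartialSol.cost, hcun, Finset.sum_union Finset.disjoint_sdiff]
      congr 1
      rw [PartialSol.cost]
      exact Finset.sum_congr rfl (fun j hj => by rw [L4 j hj])
    rw [hcostc, hcostc']
    have step1 : (∑ j ∈ K, (if d j < c.jobC p V j then w j else 0))
        ≤ ∑ j ∈ K, (if d j < c'.jobC p V j then w j else 0) := by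
      apply Finset.sum_le_sum
      intro j hj
      have hle := L3 j hj
      split_ifs with hA1 hA2 hA3
      · exact le_refl _
      · exact absurd (lt_of_lt_of_le hA1 hle) hA2
      · exact hw j
      · exact le_refl _
    have step2 : (∑ j ∈ K, (if d j < c'.jobC p V j then w j else 0))
        ≤ ∑ j ∈ N', (if d j < c'.jobC p V j then w j else 0) := by
      apply Finset.sum_le_sum_of_subset_of_nonneg hKN'
      intro j _ _
      split_ifs
      · exact hw j
      · exact le_refl _
    linarith
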